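/- Let G^e be an orientation of a bipartite graph G containing a cycle C of length 2k that is evenly oriented (an even number of its edges agree with a traversal direction). Then det(A(G^e[C])) < per(A(G[C])), where G[C] is the subgraph induced by the vertices of C. -/

import Mathlib

/-- An orientation of a simple graph `G`, encoded by its skew adjacency matrix entries:
`sign u v = 1` if the edge `uv` is directed from `u` to `v`, `-1` if it is directed
from `v` to `u`, and `0` if `uv` is not an edge. -/
structure SimpleGraph.Orientation {V : Type*} (G : SimpleGraph V) where
  sign : V → V → ℤ
  skew : ∀ u v, sign u v = - sign v u
  adj : ∀ u v, G.Adj u v → sign u v = 1 ∨ sign u v = -1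
  not_adj : ∀ u v, ¬ G.Adj u v → sign u v = 0

/-- A closed walk is oddly oriented if an odd number of its edges are directed in
agreement with the traversal direction of the walk. -/
def SimpleGraph.Orientation.OddlyOriented {V : Type*} {G : SimpleGraph V}
    (o : G.Orientation) {v : V} (c : G.Walk v v) : Prop :=
  Odd ((c.darts.filter (fun d => o.sign d.toProd.1 d.toProd.2 = 1)).length)

/-- A closed walk is evenly oriented if an even number of its edges are directed in
agreement with the traversal direction of the walk. -/
def SimpleGraph.Orientation.EvenlyOriented {V : Type*} {G : SimpleGraph V}
    (o : G.Orientation) {v : V} (c : G.Walk v v) : Prop :=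
  Even ((c.darts.filter (fun d => o.sign d.toProd.1 d.toProd.2 = 1)).length)

section Infra
variable {V : Type*} [Fintype V] [DecidableEq V] {G : SimpleGraph V}
  {v : V} (c : G.Walk v v) (hc : c.IsCycle)

theorem cyc_dropLast_nodup (hc : c.IsCycle) : c.support.dropLast.Nodup := by
  have h3 := hc.three_le_length
  have hlen := c.length_support
  have htne : c.support.tail ≠ [] := by
    intro h
    have : c.support.tail.length = c.length := by
      rw [List.length_tail, hlen]; rfl
    rw [h] at this; simp at this; omega
  have hdrop : c.support.dropLast = v :: c.support.tail.dropLast := by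
    conv_lhs => rw [c.support_eq_cons]
    exact List.dropLast_cons_of_ne_nil htne
  have htlast : c.support.tail.getLast htne = v := by
    rw [List.getLast_tail]
    exact c.getLast_support
  have hvd : v ∉ c.support.tail.dropLast := by
    intro hv
    have h2 : c.support.tail = c.support.tail.dropLast ++ [v] := by
      conv_lhs => rw [← List.dropLast_append_getLast htne, htlast]
    have hnd := hc.support_nodup
    rw [h2] at hnd
    rcases List.nodup_append'.mp hnd with ⟨_, _, hdisj⟩
    exact hdisj hv (by simp)
  rw [hdrop]
  exact List.nodup_cons.mpr ⟨hvd, (List.dropLast_sublist _).nodup hc.support_nodup⟩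

theorem cyc_mem_dropLast (hc : c.IsCycle) {x : V} (hx : x ∈ c.support) :
    x ∈ c.support.dropLast := by
  have h3 := hc.three_le_length
  have hlen := c.length_support
  have hsne : c.support ≠ [] := by intro h; rw [h] at hlen; simp at hlen
  rw [← List.dropLast_append_getLast hsne] at hx
  rcases List.mem_append.mp hx with h | h
  · exact h
  · simp only [c.getLast_support, List.mem_singleton] at h
    subst h
    have htne : c.support.tail ≠ [] := by
      intro h
      have : c.support.tail.length = c.length := by
        rw [List.length_tail, hlen]; rfl
      rw [h] at this; simp at this; omega
    have hdrop : c.support.dropLast = x :: c.support.tail.dropLast := by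
      conv_lhs => rw [c.support_eq_cons]
      exact List.dropLast_cons_of_ne_nil htne
    rw [hdrop]; simp
end Infra

theorem walkpar {V : Type*} {G : SimpleGraph V} (C : G.Coloring (Fin 2)) :
    ∀ {u w : V} (p : G.Walk u w), (Even p.length ↔ C u = C w) := by
  intro u w p
  induction p with
  | nil => simp
  | cons h q ih =>
    rename_i a b w'
    have hne := C.valid h
    rw [SimpleGraph.Walk.length_cons, Nat.even_add_one, ih]
    revert hne
    generalize C a = x; generalize C b = y; generalize C w' = z
    revert x y z; decide

theorem prodpm (l : List ℤ) (h : ∀ a ∈ l, a = 1 ∨ a = -1) :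
    l.prod = (-1) ^ (l.length + (l.filter (fun a => a = 1)).length) := by
  induction l with
  | nil => simp
  | cons a t ih =>
    have ha := h a (by simp)
    have ih' := ih (fun x hx => h x (by simp [hx]))
    rcases ha with ha | ha <;>
      simp [ha, List.filter_cons, ih', pow_succ, pow_add]

theorem stmt_10 {V : Type*} [Fintype V] [DecidableEq V] (G : SimpleGraph V)
    [DecidableRel G.Adj] (hbip : G.Colorable 2) (o : G.Orientation)
    {v : V} (c : G.Walk v v) (hc : c.IsCycle) (heven : o.EvenlyOriented c) :
    ((Matrix.of o.sign).submatrix (Subtype.val : {x // x ∈ c.support.toFinset} → V)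
        (Subtype.val : {x // x ∈ c.support.toFinset} → V)).det
      < Matrix.permanent
          ((G.adjMatrix ℤ).submatrix (Subtype.val : {x // x ∈ c.support.toFinset} → V)
            (Subtype.val : {x // x ∈ c.support.toFinset} → V)) := by
  classical
  obtain ⟨C⟩ := hbip
  have hlen_even : Even c.length := (walkpar C c).mpr rfl
  have h3 := hc.three_le_length
  have hsuplen := c.length_support
  -- the list of vertices of the cycle, as subtypes
  have hmem : ∀ x ∈ c.support.dropLast, x ∈ c.support.toFinset :=
    fun x hx => List.mem_toFinset.mpr (List.mem_of_mem_dropLast hx)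
  set n := {x // x ∈ c.support.toFinset} with hn
  let l : List n := c.support.dropLast.pmap (fun x hx => (⟨x, hx⟩ : n)) hmem
  have hlmap : l.map Subtype.val = c.support.dropLast := by
    simp [l, List.map_pmap]
  have hllen : l.length = c.length := by
    simp [l, List.length_pmap, List.length_dropLast, hsuplen]
  have hdlen : c.darts.length = c.length := c.length_darts
  have hlnodup : l.Nodup :=
    List.Nodup.pmap (fun a _ b _ h => congrArg Subtype.val h) (cyc_dropLast_nodup c hc)
  have hmem_l : ∀ x : n, x ∈ l := by
    rintro ⟨x, hx⟩
    have hx' : x ∈ c.support.dropLast :=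
      cyc_mem_dropLast c hc (List.mem_toFinset.mp hx)
    have : x ∈ l.map Subtype.val := hlmap ▸ hx'
    rcases List.mem_map.mp this with ⟨a, ha, rfl⟩
    exact ha
  have huniv : (Finset.univ : Finset n) = l.toFinset :=
    (Finset.eq_univ_iff_forall.mpr fun x => List.mem_toFinset.mpr (hmem_l x)).symm
  have hfsts : l.map Subtype.val = c.darts.map (·.fst) := by
    rw [hlmap, SimpleGraph.Walk.map_fst_darts]
  have hfst : ∀ (i : ℕ) (hi : i < l.length),
      (l[i]).val = (c.darts[i]'(by omega)).fst := by
    intro i hi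
    have h1 : (l.map Subtype.val)[i]'(by rw [List.length_map]; omega)
        = (c.darts.map (·.fst))[i]'(by rw [List.length_map]; omega) := by
      simp only [hfsts]
    simp only [List.getElem_map] at h1
    exact h1
  have hsnds : c.darts.map (·.snd) = c.support.tail := c.map_snd_darts
  have hdsnd : ∀ (i : ℕ) (hi : i < c.darts.length),
      (c.darts[i]).snd = c.support[i+1]'(by omega) := by
    intro i hi
    have h1 : (c.darts.map (·.snd))[i]'(by rw [List.length_map]; omega)
        = c.support.tail[i]'(by rw [List.length_tail]; omega) := by
      simp only [hsnds]
    simp only [List.getElem_map, List.getElem_tail] at h1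
    exact h1
  have hval : ∀ (j : ℕ) (hj : j < l.length),
      (l[j]).val = c.support[j]'(by omega) := by
    intro j hj
    have h1 : (l.map Subtype.val)[j]'(by rw [List.length_map]; omega)
        = c.support.dropLast[j]'(by rw [List.length_dropLast]; omega) := by
      simp only [hlmap]
    simp only [List.getElem_map, List.getElem_dropLast] at h1
    exact h1
  have hsnd : ∀ (i : ℕ) (hi : i < l.length),
      (l.formPerm l[i]).val = (c.darts[i]'(by omega)).snd := by
    intro i hi
    rw [List.formPerm_apply_getElem _ hlnodup i hi, hdsnd i (by omega)]
    by_cases hcase : i + 1 < l.length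
    · have hmod : (i+1) % l.length = i + 1 := Nat.mod_eq_of_lt hcase
      simp only [hmod]
      exact hval _ (by omega)
    · have hieq : i + 1 = l.length := by omega
      have hmod : (i+1) % l.length = 0 := by rw [hieq, Nat.mod_self]
      simp only [hmod]
      have h0 : c.support[0]'(by omega) = v :=
        (List.getElem_zero (by omega)).trans c.head_support
      have hL : c.support[i+1]'(by omega) = v := by
        have hne : c.support ≠ [] := by intro h; rw [h] at hsuplen; simp at hsuplen
        have hgl := (List.getLast_eq_getElem hne).symm.trans c.getLast_support
        have hidx : i + 1 = c.support.length - 1 := by omega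
        simp only [hidx]
        exact hgl
      exact (hval 0 (by omega)).trans (h0.trans hL.symm)
  -- permutation facts
  have hl2 : 2 ≤ l.length := by omega
  have hcyc : (l.formPerm).IsCycle := List.isCycle_formPerm hlnodup hl2
  have hne1 : ∀ x : n, l ≠ [x] := by
    intro x h; rw [h] at hl2; simp at hl2
  have hsupp : (l.formPerm).support = l.toFinset :=
    List.support_formPerm_of_nodup l hlnodup hne1
  have hsigma : Equiv.Perm.sign l.formPerm = -1 := by
    rw [hcyc.sign, hsupp, List.toFinset_card_of_nodup hlnodup, hllen,
      hlen_even.neg_one_pow]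
  have hkey : ∀ x : n, ∃ (i : ℕ) (hi : i < l.length),
      l[i] = x := fun x => List.mem_iff_getElem.mp (hmem_l x)
  have hadj : ∀ x : n, G.Adj x.val (l.formPerm x).val := by
    intro x
    obtain ⟨i, hi, rfl⟩ := hkey x
    rw [hfst i hi, hsnd i hi]
    exact (c.darts[i]'(by omega)).adj
  have hlistprod : l.map (fun x => o.sign x.val (l.formPerm x).val)
      = c.darts.map (fun d => o.sign d.fst d.snd) := by
    apply List.ext_getElem (by rw [List.length_map, List.length_map]; omega)
    intro i h1 h2
    simp only [List.getElem_map]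
    rw [hfst i (by rw [List.length_map] at h1; omega),
      hsnd i (by rw [List.length_map] at h1; omega)]
  have hfilter : ((c.darts.map (fun d => o.sign d.fst d.snd)).filter
      (fun a => a = 1)).length
      = ((c.darts.filter (fun d => o.sign d.toProd.1 d.toProd.2 = 1)).length) := by
    rw [List.filter_map, List.length_map]
    rfl
  have hsignprod : ∏ x : n, o.sign x.val (l.formPerm x).val = 1 := by
    rw [huniv, List.prod_toFinset _ hlnodup, hlistprod,
      prodpm _ (fun a ha => by
        rcases List.mem_map.mp ha with ⟨d, _, rfl⟩
        exact o.adj _ _ d.adj)]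
    rw [List.length_map, hfilter]
    have hev : Even (c.darts.length +
        (c.darts.filter (fun d => o.sign d.toProd.1 d.toProd.2 = 1)).length) := by
      refine Even.add ?_ heven
      rw [hdlen]; exact hlen_even
    exact hev.neg_one_pow
  set S := (Matrix.of o.sign).submatrix (Subtype.val : n → V) (Subtype.val : n → V)
    with hS
  set A := (G.adjMatrix ℤ).submatrix (Subtype.val : n → V) (Subtype.val : n → V)
    with hA
  rw [Matrix.det_apply]
  unfold Matrix.permanent
  refine Finset.sum_lt_sum (fun σ _ => ?_) ⟨(l.formPerm)⁻¹, Finset.mem_univ _, ?_⟩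
  · by_cases hall : ∀ i : n, G.Adj (σ i).val i.val
    · have hAp : ∏ i, A (σ i) i = 1 :=
        Finset.prod_eq_one fun i _ => by
          simp [hA, Matrix.submatrix_apply, hall i]
      have hSp : (∏ i, S (σ i) i) = 1 ∨ (∏ i, S (σ i) i) = -1 := by
        refine Finset.prod_induction _ (fun x => x = 1 ∨ x = -1) ?_ (Or.inl rfl) ?_
        · rintro a b (rfl|rfl) (rfl|rfl) <;> norm_num
        · intro i _
          simpa [hS, Matrix.submatrix_apply] using o.adj _ _ (hall i)
      rw [hAp]
      rcases Int.units_eq_one_or (Equiv.Perm.sign σ) with hs | hs <;>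
        rcases hSp with hp | hp <;>
          rw [Units.smul_def, hs, hp] <;> norm_num
    · push_neg at hall
      obtain ⟨i, hi⟩ := hall
      have hAp : ∏ j, A (σ j) j = 0 :=
        Finset.prod_eq_zero (Finset.mem_univ i)
          (by simp [hA, Matrix.submatrix_apply, hi])
      have hSp : ∏ j, S (σ j) j = 0 :=
        Finset.prod_eq_zero (Finset.mem_univ i)
          (by simp [hS, Matrix.submatrix_apply, o.not_adj _ _ hi])
      rw [hAp, hSp, smul_zero]
  · have hre : ∀ (M : Matrix n n ℤ),
        ∏ i, M ((l.formPerm)⁻¹ i) i = ∏ i, M i (l.formPerm i) := by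
      intro M
      rw [← Equiv.prod_comp l.formPerm (fun j => M ((l.formPerm)⁻¹ j) j)]
      simp
    rw [hre S, hre A]
    have hSp : ∏ i, S i (l.formPerm i) = 1 := by
      rw [← hsignprod]
      exact Finset.prod_congr rfl (fun i _ => by simp [hS])
    have hAp : ∏ i, A i (l.formPerm i) = 1 :=
      Finset.prod_eq_one fun i _ => by
        simp [hA, Matrix.submatrix_apply, hadj i]
    rw [hSp, hAp, Equiv.Perm.sign_inv, hsigma]
    norm_num [Units.smul_def]
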